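/- arXiv:1401.0154 — 2 statements merged into one kernel-verified Lean document; each statement's English description precedes it below -/
import Mathlib

section
/- Let G=(V,D) be a finite connected symmetric digraph with weight w and 1-form θ, with twisted Szegedy walk U = SC and discriminant T = d_A d_B*. Set L := ran(d_A*) + ran(d_B*), |E| := |D|/2, m₁ := dim ker(T − I), m₋₁ := dim ker(T + I). Then { ψ ∈ ℓ²(D) : Uψ = ψ and ψ ⟂ L } = ker(d_A) ∩ ker(S + I), and this space has dimension max(0, |E| − |V| + m₁); likewise { ψ ∈ ℓ²(D) : Uψ = −ψ and ψ ⟂ L } = ker(d_A) ∩ ker(S − I), of dimension max(0, |E| − |V| + m₋₁). -/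
open Finset

/-- A finite symmetric digraph: finite nonempty vertex and arc sets, origin/terminus maps,
and a fixed-point-free involutive arc reversal with `o (rev e) = t e`; every vertex has
out-degree at least one. -/
structure SymDigraph where
  V : Type
  D : Type
  [fintypeV : Fintype V]
  [fintypeD : Fintype D]
  [decEqV : DecidableEq V]
  [decEqD : DecidableEq D]
  [nonemptyV : Nonempty V]
  o : D → V
  t : D → V
  rev : D → D
  rev_ne : ∀ e, rev e ≠ e
  rev_rev : ∀ e, rev (rev e) = e
  o_rev : ∀ e, o (rev e) = t e
  exists_arc : ∀ u : V, ∃ e : D, o e = u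

attribute [instance] SymDigraph.fintypeV SymDigraph.fintypeD SymDigraph.decEqV
  SymDigraph.decEqD SymDigraph.nonemptyV

namespace SymDigraph

variable (G : SymDigraph)

/-- out-degree of a vertex -/
def deg (u : G.V) : ℕ := (univ.filter fun e => G.o e = u).card

/-- a weight: never zero and with unit square-sum over the arcs leaving each vertex -/
def IsWeight (w : G.D → ℂ) : Prop :=
  (∀ e, w e ≠ 0) ∧
    ∀ u : G.V, ∑ e ∈ univ.filter (fun e => G.o e = u), ‖w e‖ ^ 2 = 1

/-- a 1-form: antisymmetric under arc reversal -/
def IsOneForm (θ : G.D → ℝ) : Prop := ∀ e, θ (G.rev e) = - θ e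

/-- the boundary operator `d_A : ℓ²(D) → ℓ²(V)`, `(d_A φ)(v) = ∑_{e : o e = v} conj (w e) * φ e` -/
noncomputable def dA (w : G.D → ℂ) : (G.D → ℂ) →ₗ[ℂ] (G.V → ℂ) where
  toFun φ := fun v => ∑ e ∈ univ.filter (fun e => G.o e = v), (starRingEnd ℂ) (w e) * φ e
  map_add' φ ψ := by
    funext v
    simp [mul_add, Finset.sum_add_distrib]
  map_smul' c φ := by
    funext v
    simp only [Pi.smul_apply, smul_eq_mul, RingHom.id_apply, Finset.mul_sum]
    exact Finset.sum_congr rfl fun e _ => by ring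

/-- the boundary operator `d_B`, `(d_B φ)(v) = ∑_{e : o e = v} conj (w e) e^{-iθ(e)} φ(ē)` -/
noncomputable def dB (w : G.D → ℂ) (θ : G.D → ℝ) : (G.D → ℂ) →ₗ[ℂ] (G.V → ℂ) where
  toFun φ := fun v => ∑ e ∈ univ.filter (fun e => G.o e = v),
      (starRingEnd ℂ) (w e) * Complex.exp (-(θ e : ℂ) * Complex.I) * φ (G.rev e)
  map_add' φ ψ := by
    funext v
    simp [mul_add, Finset.sum_add_distrib]
  map_smul' c φ := by
    funext v
    simp only [Pi.smul_apply, smul_eq_mul, RingHom.id_apply, Finset.mul_sum]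
    exact Finset.sum_congr rfl fun e _ => by ring

/-- the coboundary operator `d_A* : ℓ²(V) → ℓ²(D)`, `(d_A* f)(e) = w e * f (o e)` -/
noncomputable def dAadj (w : G.D → ℂ) : (G.V → ℂ) →ₗ[ℂ] (G.D → ℂ) where
  toFun f := fun e => w e * f (G.o e)
  map_add' f g := by funext e; simp [mul_add]
  map_smul' c f := by funext e; simp only [Pi.smul_apply, smul_eq_mul, RingHom.id_apply]; ring

/-- the coboundary operator `d_B*`, `(d_B* f)(e) = e^{-iθ(e)} w(ē) f (t e)` -/
noncomputable def dBadj (w : G.D → ℂ) (θ : G.D → ℝ) : (G.V → ℂ) →ₗ[ℂ] (G.D → ℂ) where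
  toFun f := fun e => Complex.exp (-(θ e : ℂ) * Complex.I) * w (G.rev e) * f (G.t e)
  map_add' f g := by funext e; simp [mul_add]
  map_smul' c f := by funext e; simp only [Pi.smul_apply, smul_eq_mul, RingHom.id_apply]; ring

/-- the twisted shift `S`, `(Sφ)(e) = e^{-iθ(e)} φ(ē)` -/
noncomputable def shiftS (θ : G.D → ℝ) : (G.D → ℂ) →ₗ[ℂ] (G.D → ℂ) where
  toFun φ := fun e => Complex.exp (-(θ e : ℂ) * Complex.I) * φ (G.rev e)
  map_add' φ ψ := by funext e; simp [mul_add]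
  map_smul' c φ := by funext e; simp only [Pi.smul_apply, smul_eq_mul, RingHom.id_apply]; ring

/-- the coin operator `C = 2 d_A* d_A - I` -/
noncomputable def coinC (w : G.D → ℂ) : (G.D → ℂ) →ₗ[ℂ] (G.D → ℂ) :=
  (2 : ℂ) • (G.dAadj w ∘ₗ G.dA w) - LinearMap.id

/-- the twisted Szegedy walk `U = S C` -/
noncomputable def walkU (w : G.D → ℂ) (θ : G.D → ℝ) : (G.D → ℂ) →ₗ[ℂ] (G.D → ℂ) :=
  G.shiftS θ ∘ₗ G.coinC w

/-- the discriminant operator `T = d_A d_B*` -/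
noncomputable def discT (w : G.D → ℂ) (θ : G.D → ℝ) : (G.V → ℂ) →ₗ[ℂ] (G.V → ℂ) :=
  G.dA w ∘ₗ G.dBadj w θ

/-- the standard Hermitian inner product on `ℓ²(D)` -/
noncomputable def innD (φ ψ : G.D → ℂ) : ℂ := ∑ e, (starRingEnd ℂ) (φ e) * ψ e

/-- the standard Hermitian inner product on `ℓ²(V)` -/
noncomputable def innV (f g : G.V → ℂ) : ℂ := ∑ v, (starRingEnd ℂ) (f v) * g v

end SymDigraph

/-- `G` is connected: any two vertices are joined by a (possibly empty) path of arcs. -/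
def SymDigraph.Connected (G : SymDigraph) : Prop :=
  ∀ u v : G.V, Relation.ReflTransGen (fun a b => ∃ e : G.D, G.o e = a ∧ G.t e = b) u v
namespace SymDigraph

variable (G : SymDigraph) (w : G.D → ℂ) (θ : G.D → ℝ)

lemma dA_apply (φ : G.D → ℂ) (v : G.V) :
    G.dA w φ v = ∑ e ∈ univ.filter (fun e => G.o e = v), (starRingEnd ℂ) (w e) * φ e := rfl

lemma dB_apply (φ : G.D → ℂ) (v : G.V) :
    G.dB w θ φ v = ∑ e ∈ univ.filter (fun e => G.o e = v),
      (starRingEnd ℂ) (w e) * Complex.exp (-(θ e : ℂ) * Complex.I) * φ (G.rev e) := rfl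

lemma dAadj_apply (f : G.V → ℂ) (e : G.D) : G.dAadj w f e = w e * f (G.o e) := rfl

lemma dBadj_apply (f : G.V → ℂ) (e : G.D) :
    G.dBadj w θ f e = Complex.exp (-(θ e : ℂ) * Complex.I) * w (G.rev e) * f (G.t e) := rfl

lemma shiftS_apply (φ : G.D → ℂ) (e : G.D) :
    G.shiftS θ φ e = Complex.exp (-(θ e : ℂ) * Complex.I) * φ (G.rev e) := rfl

lemma sum_rev (g : G.D → ℂ) : ∑ e, g (G.rev e) = ∑ e, g e :=
  Fintype.sum_equiv (Function.Involutive.toPerm G.rev G.rev_rev) _ _ (fun _ => rfl)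

lemma innD_add_left (φ χ ψ : G.D → ℂ) : G.innD (φ + χ) ψ = G.innD φ ψ + G.innD χ ψ := by
  simp [innD, add_mul, Finset.sum_add_distrib]

lemma innD_self_eq_zero {ψ : G.D → ℂ} (h : G.innD ψ ψ = 0) : ψ = 0 := by
  have h1 : ((∑ e, Complex.normSq (ψ e) : ℝ) : ℂ) = 0 := by
    push_cast
    simpa [innD, Complex.normSq_eq_conj_mul_self] using h
  rw [Complex.ofReal_eq_zero] at h1
  funext e
  have h2 := (Finset.sum_eq_zero_iff_of_nonneg
    (fun i _ => Complex.normSq_nonneg (ψ i))).1 h1 e (mem_univ e)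
  exact Complex.normSq_eq_zero.1 h2

lemma innV_self_eq_zero {f : G.V → ℂ} (h : G.innV f f = 0) : f = 0 := by
  have h1 : ((∑ v, Complex.normSq (f v) : ℝ) : ℂ) = 0 := by
    push_cast
    simpa [innV, Complex.normSq_eq_conj_mul_self] using h
  rw [Complex.ofReal_eq_zero] at h1
  funext v
  have h2 := (Finset.sum_eq_zero_iff_of_nonneg
    (fun i _ => Complex.normSq_nonneg (f i))).1 h1 v (mem_univ v)
  exact Complex.normSq_eq_zero.1 h2

lemma adj_A (f : G.V → ℂ) (ψ : G.D → ℂ) :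
    G.innD (G.dAadj w f) ψ = G.innV f (G.dA w ψ) := by
  unfold innD innV
  rw [← Finset.sum_fiberwise univ G.o
    (fun e => (starRingEnd ℂ) (G.dAadj w f e) * ψ e)]
  refine Finset.sum_congr rfl fun v _ => ?_
  rw [dA_apply, Finset.mul_sum]
  refine Finset.sum_congr rfl fun e he => ?_
  rw [dAadj_apply, ← (Finset.mem_filter.1 he).2, map_mul]
  ring

lemma adj_S (hθ : G.IsOneForm θ) (φ ψ : G.D → ℂ) :
    G.innD (G.shiftS θ φ) ψ = G.innD φ (G.shiftS θ ψ) := by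
  unfold innD
  rw [← G.sum_rev (fun e => (starRingEnd ℂ) (φ e) * G.shiftS θ ψ e)]
  refine Finset.sum_congr rfl fun e _ => ?_
  rw [shiftS_apply, shiftS_apply, G.rev_rev, hθ e]
  push_cast
  rw [map_mul, ← Complex.exp_conj]
  simp only [map_mul, map_neg, Complex.conj_I, Complex.conj_ofReal]
  ring_nf

lemma S_S (hθ : G.IsOneForm θ) (φ : G.D → ℂ) : G.shiftS θ (G.shiftS θ φ) = φ := by
  funext e
  rw [shiftS_apply, shiftS_apply, G.rev_rev, hθ e, ← mul_assoc, ← Complex.exp_add]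
  push_cast
  ring_nf
  simp

lemma dB_eq : G.dB w θ = G.dA w ∘ₗ G.shiftS θ := by
  refine LinearMap.ext fun φ => funext fun v => ?_
  rw [LinearMap.comp_apply, dB_apply, dA_apply]
  exact Finset.sum_congr rfl fun e _ => by rw [shiftS_apply, mul_assoc]

lemma dBadj_eq : G.dBadj w θ = G.shiftS θ ∘ₗ G.dAadj w := by
  refine LinearMap.ext fun f => funext fun e => ?_
  rw [LinearMap.comp_apply, dBadj_apply, shiftS_apply, dAadj_apply, G.o_rev, mul_assoc]

lemma A_Aadj (hw : G.IsWeight w) : G.dA w ∘ₗ G.dAadj w = LinearMap.id := by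
  refine LinearMap.ext fun f => funext fun v => ?_
  rw [LinearMap.comp_apply, dA_apply]
  have h1 : ∀ e ∈ univ.filter (fun e => G.o e = v),
      (starRingEnd ℂ) (w e) * G.dAadj w f e = ((‖w e‖ ^ 2 : ℝ) : ℂ) * f v := by
    intro e he
    rw [dAadj_apply, (Finset.mem_filter.1 he).2]
    push_cast [Complex.sq_norm]
    rw [Complex.normSq_eq_conj_mul_self]
    ring
  rw [Finset.sum_congr rfl h1, ← Finset.sum_mul, ← Complex.ofReal_sum, hw.2 v]
  simp

end SymDigraph
namespace SymDigraph

variable (G : SymDigraph) (w : G.D → ℂ) (θ : G.D → ℝ)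

lemma adj_B (hθ : G.IsOneForm θ) (g : G.V → ℂ) (ψ : G.D → ℂ) :
    G.innD (G.dBadj w θ g) ψ = G.innV g (G.dB w θ ψ) := by
  rw [dBadj_eq, LinearMap.comp_apply, adj_S _ _ hθ, adj_A, dB_eq, LinearMap.comp_apply]

lemma innV_zero_right (f : G.V → ℂ) : G.innV f 0 = 0 := by simp [innV]

/-- abstract rank lemma: `rank A = rank (A ∘ B)` when `B` is adjoint to `A`. -/
lemma rank_comp (A : (G.D → ℂ) →ₗ[ℂ] (G.V → ℂ)) (B : (G.V → ℂ) →ₗ[ℂ] (G.D → ℂ))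
    (hadj : ∀ f ψ, G.innD (B f) ψ = G.innV f (A ψ)) :
    Module.finrank ℂ (LinearMap.range A) = Module.finrank ℂ (LinearMap.range (A ∘ₗ B)) := by
  have hker : LinearMap.ker (A ∘ₗ B) = LinearMap.ker B := by
    apply le_antisymm
    · intro f hf
      rw [LinearMap.mem_ker, LinearMap.comp_apply] at hf
      rw [LinearMap.mem_ker]
      apply G.innD_self_eq_zero
      rw [hadj, hf, innV_zero_right]
    · intro f hf
      rw [LinearMap.mem_ker] at hf
      rw [LinearMap.mem_ker, LinearMap.comp_apply, hf, map_zero]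
  have hdisj : LinearMap.range A ⊓ LinearMap.ker B = ⊥ := by
    rw [eq_bot_iff]
    rintro f ⟨⟨ψ, rfl⟩, hfB⟩
    rw [SetLike.mem_coe, LinearMap.mem_ker] at hfB
    rw [Submodule.mem_bot]
    apply G.innV_self_eq_zero
    rw [← hadj, hfB]
    simp [innD]
  have h1 := LinearMap.finrank_range_add_finrank_ker (A ∘ₗ B)
  have h2 := Submodule.finrank_sup_add_finrank_inf_eq (LinearMap.range A) (LinearMap.ker B)
  have h3 : Module.finrank ℂ ↥(LinearMap.range A ⊔ LinearMap.ker B)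
      ≤ Module.finrank ℂ (G.V → ℂ) := Submodule.finrank_le _
  have h4 : Module.finrank ℂ (LinearMap.range (A ∘ₗ B))
      ≤ Module.finrank ℂ (LinearMap.range A) :=
    Submodule.finrank_mono (LinearMap.range_comp_le_range _ _)
  rw [hker] at h1
  rw [hdisj, finrank_bot] at h2
  omega

/-- an orientation sign on arcs -/
noncomputable def sgn : G.D → ℂ := fun e =>
  if (Fintype.equivFin G.D) e < (Fintype.equivFin G.D) (G.rev e) then 1 else -1

lemma sgn_rev (e : G.D) : G.sgn (G.rev e) = - G.sgn e := by
  unfold sgn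
  rw [G.rev_rev]
  rcases lt_trichotomy ((Fintype.equivFin G.D) e) ((Fintype.equivFin G.D) (G.rev e)) with h | h | h
  · rw [if_neg (not_lt.2 h.le), if_pos h]
  · exact absurd ((Fintype.equivFin G.D).injective h).symm (G.rev_ne e)
  · rw [if_pos h, if_neg (not_lt.2 h.le)]; norm_num

lemma sgn_mul_self (e : G.D) : G.sgn e * G.sgn e = 1 := by
  unfold sgn; split <;> norm_num

/-- multiplication by the sign, as a linear map -/
noncomputable def sgnMap : (G.D → ℂ) →ₗ[ℂ] (G.D → ℂ) where
  toFun φ := fun e => G.sgn e * φ e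
  map_add' φ ψ := by funext e; simp [mul_add]
  map_smul' c φ := by funext e; simp only [Pi.smul_apply, smul_eq_mul, RingHom.id_apply]; ring

lemma sgnMap_sgnMap (φ : G.D → ℂ) : G.sgnMap (G.sgnMap φ) = φ := by
  funext e
  show G.sgn e * (G.sgn e * φ e) = φ e
  rw [← mul_assoc, G.sgn_mul_self, one_mul]

lemma shiftS_sgnMap (φ : G.D → ℂ) :
    G.shiftS θ (G.sgnMap φ) = - G.sgnMap (G.shiftS θ φ) := by
  funext e
  show Complex.exp (-(θ e : ℂ) * Complex.I) * (G.sgn (G.rev e) * φ (G.rev e))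
    = - (G.sgn e * (Complex.exp (-(θ e : ℂ) * Complex.I) * φ (G.rev e)))
  rw [G.sgn_rev]
  ring

end SymDigraph
namespace SymDigraph

variable (G : SymDigraph) (w : G.D → ℂ) (θ : G.D → ℝ)

/-- the sign map as a linear equivalence -/
noncomputable def sgnEquiv : (G.D → ℂ) ≃ₗ[ℂ] (G.D → ℂ) :=
  LinearEquiv.ofLinear G.sgnMap G.sgnMap
    (LinearMap.ext fun φ => G.sgnMap_sgnMap φ) (LinearMap.ext fun φ => G.sgnMap_sgnMap φ)

lemma mem_ker_S_add (σ : ℂ) (ψ : G.D → ℂ) :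
    ψ ∈ LinearMap.ker (G.shiftS θ + σ • LinearMap.id) ↔ G.shiftS θ ψ = -(σ • ψ) := by
  rw [LinearMap.mem_ker, LinearMap.add_apply, LinearMap.smul_apply, LinearMap.id_apply,
    add_eq_zero_iff_eq_neg]

lemma map_sgn_ker (σ : ℂ) :
    Submodule.map (G.sgnEquiv : (G.D → ℂ) →ₗ[ℂ] (G.D → ℂ))
      (LinearMap.ker (G.shiftS θ + σ • LinearMap.id))
    = LinearMap.ker (G.shiftS θ + (-σ) • LinearMap.id) := by
  apply le_antisymm
  · rintro x ⟨ψ, hψ, rfl⟩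
    rw [SetLike.mem_coe, mem_ker_S_add] at hψ
    rw [mem_ker_S_add]
    show G.shiftS θ (G.sgnMap ψ) = -((-σ) • G.sgnMap ψ)
    rw [G.shiftS_sgnMap, hψ, show -(σ • ψ) = (-σ) • ψ by module, map_smul]
  · intro x hx
    rw [mem_ker_S_add] at hx
    refine ⟨G.sgnMap x, ?_, G.sgnMap_sgnMap x⟩
    rw [SetLike.mem_coe, mem_ker_S_add]
    rw [G.shiftS_sgnMap, hx, show -((-σ) • x) = σ • x by module, map_smul]

lemma finrank_ker_S (hθ : G.IsOneForm θ) (σ : ℂ) (hσ : σ = 1 ∨ σ = -1) :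
    2 * Module.finrank ℂ ↥(LinearMap.ker (G.shiftS θ + σ • LinearMap.id))
      = Fintype.card G.D := by
  have hdim : Module.finrank ℂ ↥(LinearMap.ker (G.shiftS θ + (-σ) • LinearMap.id))
      = Module.finrank ℂ ↥(LinearMap.ker (G.shiftS θ + σ • LinearMap.id)) := by
    rw [← G.map_sgn_ker θ σ]
    exact LinearEquiv.finrank_map_eq _ _
  have hσσ : σ * σ = 1 := by rcases hσ with h | h <;> rw [h] <;> norm_num
  have hinf : LinearMap.ker (G.shiftS θ + σ • LinearMap.id)
      ⊓ LinearMap.ker (G.shiftS θ + (-σ) • LinearMap.id) = ⊥ := by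
    rw [eq_bot_iff]
    intro ψ hψ
    obtain ⟨h1, h2⟩ := Submodule.mem_inf.1 hψ
    rw [mem_ker_S_add] at h1 h2
    rw [Submodule.mem_bot]
    have h5 : ((2 : ℂ) * σ) • ψ = 0 := by
      have h3 : σ • ψ - (-σ) • ψ = 0 := by
        have := h1.symm.trans h2
        have h4 : -(σ • ψ) = -((-σ) • ψ) := this ▸ rfl
        have h6 := neg_injective h4
        rw [h6]; abel
      rw [show σ • ψ - (-σ) • ψ = ((2:ℂ) * σ) • ψ by module] at h3
      exact h3
    have h6 : (2 : ℂ) * σ ≠ 0 := by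
      rcases hσ with h | h <;> rw [h] <;> norm_num
    exact (smul_eq_zero.1 h5).resolve_left h6
  have hsup : LinearMap.ker (G.shiftS θ + σ • LinearMap.id)
      ⊔ LinearMap.ker (G.shiftS θ + (-σ) • LinearMap.id) = ⊤ := by
    rw [eq_top_iff]
    intro φ _
    rw [Submodule.mem_sup]
    refine ⟨(1/2 : ℂ) • (φ - σ • G.shiftS θ φ), ?_, (1/2 : ℂ) • (φ + σ • G.shiftS θ φ), ?_, by module⟩
    · rw [mem_ker_S_add, map_smul, map_sub, map_smul, G.S_S θ hθ]
      rw [show -(σ • ((1/2 : ℂ) • (φ - σ • G.shiftS θ φ)))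
        = (1/2 : ℂ) • ((σ * σ) • G.shiftS θ φ - σ • φ) by module]
      rw [hσσ, one_smul]
    · rw [mem_ker_S_add, map_smul, map_add, map_smul, G.S_S θ hθ]
      rw [show -((-σ) • ((1/2 : ℂ) • (φ + σ • G.shiftS θ φ)))
        = (1/2 : ℂ) • (σ • φ + (σ * σ) • G.shiftS θ φ) by module]
      rw [hσσ, one_smul]
      module
  have htot := Submodule.finrank_sup_add_finrank_inf_eq
    (LinearMap.ker (G.shiftS θ + σ • LinearMap.id))
    (LinearMap.ker (G.shiftS θ + (-σ) • LinearMap.id))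
  rw [hinf, hsup, finrank_bot, finrank_top, Module.finrank_fintype_fun_eq_card, hdim] at htot
  omega

end SymDigraph
namespace SymDigraph

variable (G : SymDigraph) (w : G.D → ℂ) (θ : G.D → ℝ)

lemma innD_sub_left (φ χ ψ : G.D → ℂ) : G.innD (φ - χ) ψ = G.innD φ ψ - G.innD χ ψ := by
  simp [innD, sub_mul, Finset.sum_sub_distrib]

lemma innD_smul_left (c : ℂ) (φ ψ : G.D → ℂ) :
    G.innD (c • φ) ψ = (starRingEnd ℂ) c * G.innD φ ψ := by
  simp only [innD, Pi.smul_apply, smul_eq_mul, map_mul, Finset.mul_sum]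
  exact Finset.sum_congr rfl fun e _ => by ring

lemma innV_sub_right (f : G.V → ℂ) (x y : G.V → ℂ) :
    G.innV f (x - y) = G.innV f x - G.innV f y := by
  simp [innV, mul_sub, Finset.sum_sub_distrib]

lemma innV_smul_right (c : ℂ) (f x : G.V → ℂ) :
    G.innV f (c • x) = c * G.innV f x := by
  simp only [innV, Pi.smul_apply, smul_eq_mul, Finset.mul_sum]
  exact Finset.sum_congr rfl fun v _ => by ring

lemma S_comp_S (hθ : G.IsOneForm θ) : G.shiftS θ ∘ₗ G.shiftS θ = LinearMap.id :=
  LinearMap.ext fun φ => G.S_S θ hθ φ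

lemma B_Aadj (hw : G.IsWeight w) : G.dB w θ ∘ₗ G.dAadj w = G.discT w θ := by
  rw [dB_eq, LinearMap.comp_assoc, ← dBadj_eq]; rfl

lemma B_Badj (hw : G.IsWeight w) (hθ : G.IsOneForm θ) :
    G.dB w θ ∘ₗ G.dBadj w θ = LinearMap.id := by
  rw [dB_eq, dBadj_eq, LinearMap.comp_assoc, ← LinearMap.comp_assoc (G.dAadj w),
    S_comp_S _ _ hθ, LinearMap.id_comp, A_Aadj _ _ hw]

lemma P_Padj (hw : G.IsWeight w) (hθ : G.IsOneForm θ) (σ : ℂ) (hσσ : σ * σ = 1) :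
    (G.dA w - σ • G.dB w θ) ∘ₗ (G.dAadj w - σ • G.dBadj w θ)
      = (2 : ℂ) • (LinearMap.id - σ • G.discT w θ) := by
  rw [LinearMap.sub_comp, LinearMap.comp_sub, LinearMap.comp_sub,
    LinearMap.smul_comp, LinearMap.smul_comp, LinearMap.comp_smul, LinearMap.comp_smul,
    A_Aadj _ _ hw, B_Aadj _ _ _ hw, B_Badj _ _ _ hw hθ]
  rw [show G.dA w ∘ₗ G.dBadj w θ = G.discT w θ from rfl]
  rw [show σ • σ • LinearMap.id = (σ * σ) • (LinearMap.id :
    (G.V → ℂ) →ₗ[ℂ] (G.V → ℂ)) from smul_smul σ σ _, hσσ, one_smul]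
  module

lemma master (hw : G.IsWeight w) (hθ : G.IsOneForm θ) (σ : ℂ) (hσ : σ = 1 ∨ σ = -1) :
    Module.finrank ℂ ↥(LinearMap.ker (G.dA w) ⊓ LinearMap.ker (G.shiftS θ + σ • LinearMap.id))
      + Fintype.card G.V
    = Module.finrank ℂ ↥(LinearMap.ker (G.shiftS θ + σ • LinearMap.id))
      + Module.finrank ℂ ↥(LinearMap.ker (LinearMap.id - σ • G.discT w θ)) := by
  have hσσ : σ * σ = 1 := by rcases hσ with h | h <;> rw [h] <;> norm_num
  have hconj : (starRingEnd ℂ) σ = σ := by rcases hσ with h | h <;> rw [h] <;> simp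
  set P := G.dA w - σ • G.dB w θ with hP
  set W := LinearMap.ker (G.shiftS θ + σ • LinearMap.id) with hW
  -- on W, P ψ = 2 • dA ψ
  have hPW : ∀ ψ, ψ ∈ W → P ψ = (2 : ℂ) • G.dA w ψ := by
    intro ψ hψ
    rw [hW, mem_ker_S_add] at hψ
    rw [hP, LinearMap.sub_apply, LinearMap.smul_apply, dB_eq, LinearMap.comp_apply, hψ,
      map_neg, map_smul]
    rw [show σ • -(σ • G.dA w ψ) = -((σ * σ) • G.dA w ψ) by module, hσσ, one_smul]
    module
  -- W ⊓ ker P = ker dA ⊓ W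
  have hWP : W ⊓ LinearMap.ker P = LinearMap.ker (G.dA w) ⊓ W := by
    ext ψ
    simp only [Submodule.mem_inf, LinearMap.mem_ker]
    constructor
    · rintro ⟨h1, h2⟩
      refine ⟨?_, h1⟩
      have := hPW ψ h1
      rw [h2] at this
      have h3 := (smul_eq_zero.1 this.symm).resolve_left (by norm_num)
      exact h3
    · rintro ⟨h1, h2⟩
      refine ⟨h2, ?_⟩
      rw [hPW ψ h2, h1, smul_zero]
  -- range of P restricted to W equals range of P
  have hrange : LinearMap.range (P.domRestrict W) = LinearMap.range P := by
    apply le_antisymm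
    · rintro x ⟨⟨ψ, hψ⟩, rfl⟩
      exact ⟨ψ, rfl⟩
    · rintro x ⟨ψ, rfl⟩
      -- use π ψ = (1/2) • (ψ - σ • S ψ) ∈ W with P (π ψ) = P ψ
      have hmem : (1/2 : ℂ) • (ψ - σ • G.shiftS θ ψ) ∈ W := by
        rw [hW, mem_ker_S_add, map_smul, map_sub, map_smul, G.S_S θ hθ]
        rw [show -(σ • ((1/2 : ℂ) • (ψ - σ • G.shiftS θ ψ)))
          = (1/2 : ℂ) • ((σ * σ) • G.shiftS θ ψ - σ • ψ) by module, hσσ, one_smul]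
      have hPS : ∀ χ, P (G.shiftS θ χ) = -(σ • P χ) := by
        intro χ
        have h1 : G.dB w θ χ = G.dA w (G.shiftS θ χ) := by
          rw [dB_eq]; rfl
        have h2 : G.dB w θ (G.shiftS θ χ) = G.dA w χ := by
          rw [dB_eq, LinearMap.comp_apply, G.S_S θ hθ]
        rw [hP, LinearMap.sub_apply, LinearMap.sub_apply, LinearMap.smul_apply,
          LinearMap.smul_apply, h1, h2]
        rw [show -(σ • (G.dA w χ - σ • G.dA w (G.shiftS θ χ)))
          = (σ * σ) • G.dA w (G.shiftS θ χ) - σ • G.dA w χ by module, hσσ, one_smul]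
      refine ⟨⟨(1/2 : ℂ) • (ψ - σ • G.shiftS θ ψ), hmem⟩, ?_⟩
      show P ((1/2 : ℂ) • (ψ - σ • G.shiftS θ ψ)) = P ψ
      rw [map_smul, map_sub, map_smul, hPS ψ]
      rw [show (1/2 : ℂ) • (P ψ - σ • -(σ • P ψ)) = (1/2 : ℂ) • (P ψ + (σ * σ) • P ψ) by module,
        hσσ, one_smul]
      module
  -- finrank of ker of restriction
  have hkerres : Module.finrank ℂ ↥(LinearMap.ker (P.domRestrict W))
      = Module.finrank ℂ ↥(LinearMap.ker (G.dA w) ⊓ W) := by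
    rw [LinearMap.ker_domRestrict, ← Submodule.finrank_map_subtype_eq W,
      Submodule.map_comap_subtype, hWP]
  -- rank-nullity for the restriction
  have hrn := LinearMap.finrank_range_add_finrank_ker (P.domRestrict W)
  rw [hrange, hkerres] at hrn
  -- rank P = rank (id - σ • T)
  have hadj : ∀ (f : G.V → ℂ) (ψ : G.D → ℂ),
      G.innD ((G.dAadj w - σ • G.dBadj w θ) f) ψ = G.innV f (P ψ) := by
    intro f ψ
    rw [LinearMap.sub_apply, LinearMap.smul_apply, innD_sub_left, innD_smul_left, hconj,
      adj_A, adj_B _ _ _ hθ, hP, LinearMap.sub_apply, LinearMap.smul_apply,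
      innV_sub_right, innV_smul_right]
  have hrank := G.rank_comp P (G.dAadj w - σ • G.dBadj w θ) hadj
  rw [P_Padj _ _ _ hw hθ σ hσσ] at hrank
  have hsm : LinearMap.range ((2 : ℂ) • (LinearMap.id - σ • G.discT w θ))
      = LinearMap.range (LinearMap.id - σ • G.discT w θ) := by
    ext x
    simp only [LinearMap.mem_range, LinearMap.smul_apply]
    constructor
    · rintro ⟨y, rfl⟩
      exact ⟨(2 : ℂ) • y, by rw [map_smul]⟩
    · rintro ⟨y, rfl⟩
      refine ⟨(1/2 : ℂ) • y, ?_⟩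
      rw [map_smul]
      module
  rw [hsm] at hrank
  have hrn2 := LinearMap.finrank_range_add_finrank_ker (LinearMap.id - σ • G.discT w θ)
  rw [Module.finrank_fintype_fun_eq_card] at hrn2
  omega

end SymDigraph
namespace SymDigraph

variable (G : SymDigraph) (w : G.D → ℂ) (θ : G.D → ℝ)

lemma coin_on_ker (ψ : G.D → ℂ) (hA : G.dA w ψ = 0) : G.coinC w ψ = -ψ := by
  rw [coinC, LinearMap.sub_apply, LinearMap.smul_apply, LinearMap.comp_apply, hA, map_zero,
    smul_zero, LinearMap.id_apply, zero_sub]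

lemma set_eq (hw : G.IsWeight w) (hθ : G.IsOneForm θ) (l : ℂ) :
    {ψ : G.D → ℂ | G.walkU w θ ψ = l • ψ ∧
        ∀ χ ∈ LinearMap.range (G.dAadj w) ⊔ LinearMap.range (G.dBadj w θ), G.innD χ ψ = 0}
      = ↑(LinearMap.ker (G.dA w) ⊓ LinearMap.ker (G.shiftS θ + l • LinearMap.id)) := by
  ext ψ
  simp only [Set.mem_setOf_eq, SetLike.mem_coe, Submodule.mem_inf, LinearMap.mem_ker]
  constructor
  · rintro ⟨hU, hperp⟩
    have hA : G.dA w ψ = 0 := by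
      have h1 : G.innD (G.dAadj w (G.dA w ψ)) ψ = 0 :=
        hperp _ (Submodule.mem_sup_left (LinearMap.mem_range_self _ _))
      rw [adj_A] at h1
      exact G.innV_self_eq_zero h1
    refine ⟨hA, ?_⟩
    have hU2 : -(G.shiftS θ ψ) = l • ψ := by
      rw [← hU]
      show -(G.shiftS θ ψ) = (G.shiftS θ ∘ₗ G.coinC w) ψ
      rw [LinearMap.comp_apply, G.coin_on_ker w ψ hA, map_neg]
    rw [LinearMap.add_apply, LinearMap.smul_apply, LinearMap.id_apply, ← hU2]
    abel
  · rintro ⟨hA, hS⟩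
    have hSψ : G.shiftS θ ψ = -(l • ψ) := (G.mem_ker_S_add θ l ψ).1 (LinearMap.mem_ker.2 hS)
    constructor
    · show (G.shiftS θ ∘ₗ G.coinC w) ψ = l • ψ
      rw [LinearMap.comp_apply, G.coin_on_ker w ψ hA, map_neg, hSψ, neg_neg]
    · intro χ hχ
      obtain ⟨a, ha, b, hb, rfl⟩ := Submodule.mem_sup.1 hχ
      obtain ⟨f, rfl⟩ := ha
      obtain ⟨g, rfl⟩ := hb
      have hB : G.dB w θ ψ = 0 := by
        rw [dB_eq, LinearMap.comp_apply, hSψ, map_neg, map_smul, hA, smul_zero, neg_zero]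
      rw [innD_add_left, adj_A, adj_B _ _ _ hθ, hA, hB, innV_zero_right, innV_zero_right,
        add_zero]

lemma ker_neg_eq (T' : (G.V → ℂ) →ₗ[ℂ] (G.V → ℂ)) : LinearMap.ker (-T') = LinearMap.ker T' := by
  ext x
  simp [LinearMap.mem_ker]

lemma dim_final (hw : G.IsWeight w) (hθ : G.IsOneForm θ) (σ : ℂ) (hσ : σ = 1 ∨ σ = -1)
    (m : ℕ) (hm : m = Module.finrank ℂ ↥(LinearMap.ker (LinearMap.id - σ • G.discT w θ))) :
    (Module.finrank ℂ
        ↥(LinearMap.ker (G.dA w) ⊓ LinearMap.ker (G.shiftS θ + σ • LinearMap.id)) : ℤ)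
      = max 0 ((Fintype.card G.D : ℤ) / 2 - (Fintype.card G.V : ℤ) + (m : ℤ)) := by
  have h1 := G.master w θ hw hθ σ hσ
  have h2 := G.finrank_ker_S θ hθ σ hσ
  rw [← hm] at h1
  set a := Module.finrank ℂ
    ↥(LinearMap.ker (G.dA w) ⊓ LinearMap.ker (G.shiftS θ + σ • LinearMap.id)) with ha
  set b := Module.finrank ℂ ↥(LinearMap.ker (G.shiftS θ + σ • LinearMap.id)) with hb
  have h1' : (a : ℤ) + (Fintype.card G.V : ℤ) = (b : ℤ) + (m : ℤ) := by exact_mod_cast h1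
  have h2' : 2 * (b : ℤ) = (Fintype.card G.D : ℤ) := by exact_mod_cast h2
  have h3 : (Fintype.card G.D : ℤ) / 2 - (Fintype.card G.V : ℤ) + (m : ℤ) = (a : ℤ) := by
    omega
  rw [h3, max_eq_right (Int.natCast_nonneg a)]

end SymDigraph
/-- For a connected finite symmetric digraph, with `L = ran d_A* + ran d_B*`,
`|E| = |D|/2`, `m₁ = dim ker(T − I)`, `m₋₁ = dim ker(T + I)`:
`{ψ : Uψ = ψ, ψ ⟂ L} = ker d_A ∩ ker(S + I)` of dimension `max(0, |E| − |V| + m₁)`, and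
`{ψ : Uψ = −ψ, ψ ⟂ L} = ker d_A ∩ ker(S − I)` of dimension `max(0, |E| − |V| + m₋₁)`. -/
theorem birth_eigenspaces (G : SymDigraph) (hG : G.Connected) (w : G.D → ℂ) (θ : G.D → ℝ)
    (hw : G.IsWeight w) (hθ : G.IsOneForm θ) :
    ({ψ : G.D → ℂ | G.walkU w θ ψ = ψ ∧
        ∀ χ ∈ LinearMap.range (G.dAadj w) ⊔ LinearMap.range (G.dBadj w θ), G.innD χ ψ = 0}
      = ↑(LinearMap.ker (G.dA w) ⊓ LinearMap.ker (G.shiftS θ + LinearMap.id))) ∧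
    ((Module.finrank ℂ
        ↥(LinearMap.ker (G.dA w) ⊓ LinearMap.ker (G.shiftS θ + LinearMap.id)) : ℤ)
      = max 0 ((Fintype.card G.D : ℤ) / 2 - (Fintype.card G.V : ℤ)
          + (Module.finrank ℂ ↥(LinearMap.ker (G.discT w θ - LinearMap.id)) : ℤ))) ∧
    ({ψ : G.D → ℂ | G.walkU w θ ψ = -ψ ∧
        ∀ χ ∈ LinearMap.range (G.dAadj w) ⊔ LinearMap.range (G.dBadj w θ), G.innD χ ψ = 0}
      = ↑(LinearMap.ker (G.dA w) ⊓ LinearMap.ker (G.shiftS θ - LinearMap.id))) ∧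
    ((Module.finrank ℂ
        ↥(LinearMap.ker (G.dA w) ⊓ LinearMap.ker (G.shiftS θ - LinearMap.id)) : ℤ)
      = max 0 ((Fintype.card G.D : ℤ) / 2 - (Fintype.card G.V : ℤ)
          + (Module.finrank ℂ ↥(LinearMap.ker (G.discT w θ + LinearMap.id)) : ℤ))) := by
  have e2 : G.shiftS θ - LinearMap.id = G.shiftS θ + (-1:ℂ) • LinearMap.id := by module
  have e4 : G.discT w θ + LinearMap.id = LinearMap.id - (-1:ℂ) • G.discT w θ := by module
  refine ⟨?_, ?_, ?_, ?_⟩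
  · have h := G.set_eq w θ hw hθ 1
    simp only [one_smul] at h
    exact h
  · have hm : Module.finrank ℂ ↥(LinearMap.ker (G.discT w θ - LinearMap.id))
        = Module.finrank ℂ ↥(LinearMap.ker (LinearMap.id - (1:ℂ) • G.discT w θ)) := by
      rw [one_smul, ← neg_sub (G.discT w θ) LinearMap.id, G.ker_neg_eq]
    have h := G.dim_final w θ hw hθ 1 (Or.inl rfl) _ hm
    rw [one_smul] at h
    exact h
  · have h := G.set_eq w θ hw hθ (-1)
    simp only [neg_one_smul] at h
    rw [e2]
    convert h using 4
  · have hm : Module.finrank ℂ ↥(LinearMap.ker (G.discT w θ + LinearMap.id))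
        = Module.finrank ℂ ↥(LinearMap.ker (LinearMap.id - (-1:ℂ) • G.discT w θ)) := by
      rw [← e4]
    have h := G.dim_final w θ hw hθ (-1) (Or.inr rfl) _ hm
    rw [← e2] at h
    exact h
end

section
/- Let G=(V,D) be a finite connected symmetric digraph and consider the Grover walk (1-form θ ≡ 0, weight w(e) = 1/√deg(o(e))), with shift (Sφ)(e) = φ(ē) and boundary operator d_A. Then the subspace M₊ := ker(d_A) ∩ ker(S + I) of ℓ²(D) equals the ℂ-linear span of { γ(c) : c an essential cycle of G }, where for a closed path c = (e₁,…,e_n), γ(c) := Σ_{j=1}^n (δ_{e_j} − δ_{ē_j}). Moreover dim M₊ = |E| − |V| + 1 with |E| = |D|/2, and U γ(c) = γ(c) for every closed path c, where U = SC is the Grover walk evolution with C = 2 d_A* d_A − I. -/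
open Finset

/-- a closed path of length `n`: consecutive arcs are composable, cyclically. -/
def SymDigraph.IsClosedPath (G : SymDigraph) {n : ℕ} (c : Fin n → G.D) : Prop :=
  ∀ j : Fin n,
    G.t (c j) = G.o (c ⟨(j.1 + 1) % n, Nat.mod_lt _ (Nat.lt_of_le_of_lt (Nat.zero_le _) j.2)⟩)

/-- the Grover weight `w(e) = 1/√(deg (o e))` -/
noncomputable def SymDigraph.groverWeight (G : SymDigraph) : G.D → ℂ :=
  fun e => (Real.sqrt (G.deg (G.o e)) : ℂ)⁻¹

/-- the standard basis vector `δ_e ∈ ℓ²(D)` -/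
noncomputable def SymDigraph.deltaArc (G : SymDigraph) (e : G.D) : G.D → ℂ :=
  fun f => if f = e then 1 else 0

/-- `γ(c) = ∑_j (δ_{e_j} − δ_{ē_j})` for a (closed) path `c` -/
noncomputable def SymDigraph.gammaVec (G : SymDigraph) {n : ℕ} (c : Fin n → G.D) : G.D → ℂ :=
  ∑ j : Fin n, (G.deltaArc (c j) - G.deltaArc (G.rev (c j)))

namespace SymDigraph

variable (G : SymDigraph)

lemma deg_pos (u : G.V) : 0 < G.deg u := by
  obtain ⟨e, he⟩ := G.exists_arc u
  exact Finset.card_pos.mpr ⟨e, by simp [he]⟩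

lemma sqrtdeg_ne (u : G.V) : (Real.sqrt (G.deg u) : ℂ) ≠ 0 := by
  have h : (0:ℝ) < Real.sqrt (G.deg u) :=
    Real.sqrt_pos.mpr (by exact_mod_cast G.deg_pos u)
  exact_mod_cast h.ne'

lemma rev_inj : Function.Injective G.rev :=
  Function.LeftInverse.injective G.rev_rev

lemma conj_grover (e : G.D) :
    (starRingEnd ℂ) (G.groverWeight e) = G.groverWeight e := by
  simp [groverWeight, map_inv₀, Complex.conj_ofReal]

lemma dA_grover_apply (φ : G.D → ℂ) (v : G.V) :
    G.dA G.groverWeight φ v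
      = ((Real.sqrt (G.deg v) : ℂ))⁻¹ * ∑ e ∈ univ.filter (fun e => G.o e = v), φ e := by
  rw [Finset.mul_sum]
  refine Finset.sum_congr rfl fun e he => ?_
  have hv : G.o e = v := by simpa using he
  rw [conj_grover]
  simp [groverWeight, hv]

lemma mem_kerdA_iff (φ : G.D → ℂ) :
    φ ∈ LinearMap.ker (G.dA G.groverWeight) ↔
      ∀ v, ∑ e ∈ univ.filter (fun e => G.o e = v), φ e = 0 := by
  constructor
  · intro h v
    have := congrFun (LinearMap.mem_ker.mp h) v
    rw [dA_grover_apply] at this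
    rcases mul_eq_zero.mp this with h' | h'
    · exact absurd h' (inv_ne_zero (G.sqrtdeg_ne v))
    · exact h'
  · intro h
    apply LinearMap.mem_ker.mpr
    funext v
    rw [dA_grover_apply, h v, mul_zero]
    rfl

lemma shiftS_zero_apply (φ : G.D → ℂ) (e : G.D) :
    G.shiftS 0 φ e = φ (G.rev e) := by
  simp [shiftS]

lemma mem_kerS_iff (φ : G.D → ℂ) :
    φ ∈ LinearMap.ker (G.shiftS 0 + LinearMap.id) ↔
      ∀ e, φ (G.rev e) = - φ e := by
  constructor
  · intro h e
    have := congrFun (LinearMap.mem_ker.mp h) e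
    simp only [LinearMap.add_apply, LinearMap.id_apply, Pi.add_apply,
      G.shiftS_zero_apply, Pi.zero_apply] at this
    linear_combination this
  · intro h
    apply LinearMap.mem_ker.mpr
    funext e
    simp only [LinearMap.add_apply, LinearMap.id_apply, Pi.add_apply,
      G.shiftS_zero_apply, Pi.zero_apply]
    rw [h e]; ring

end SymDigraph

namespace SymDigraph

variable (G : SymDigraph)

lemma gammaVec_apply {n : ℕ} (c : Fin n → G.D) (e : G.D) :
    G.gammaVec c e
      = ∑ j : Fin n, ((if e = c j then (1:ℂ) else 0) - (if e = G.rev (c j) then 1 else 0)) := by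
  simp [gammaVec, deltaArc]

lemma gammaVec_rev {n : ℕ} (c : Fin n → G.D) (e : G.D) :
    G.gammaVec c (G.rev e) = - G.gammaVec c e := by
  rw [gammaVec_apply, gammaVec_apply, ← Finset.sum_neg_distrib]
  refine Finset.sum_congr rfl fun j _ => ?_
  have h1 : (G.rev e = c j) ↔ (e = G.rev (c j)) := by
    constructor
    · intro h; rw [← h, G.rev_rev]
    · intro h; rw [h, G.rev_rev]
  have h2 : (G.rev e = G.rev (c j)) ↔ (e = c j) :=
    ⟨fun h => G.rev_inj h, fun h => by rw [h]⟩
  rw [if_congr h1 rfl rfl, if_congr h2 rfl rfl]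
  ring

lemma sum_filter_ite (v : G.V) (a : G.D) :
    ∑ e ∈ univ.filter (fun e => G.o e = v), (if e = a then (1:ℂ) else 0)
      = if G.o a = v then 1 else 0 := by
  rw [Finset.sum_ite_eq']
  simp

/-- the cyclic successor bijection on `Fin n` used in `IsClosedPath` -/
lemma cyc_bijective (n : ℕ) :
    Function.Bijective (fun j : Fin n =>
      (⟨(j.1 + 1) % n, Nat.mod_lt _ (Nat.lt_of_le_of_lt (Nat.zero_le _) j.2)⟩ : Fin n)) := by
  rw [Finite.injective_iff_bijective.symm]
  intro j k h
  have hj := j.2; have hk := k.2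
  have h' : (j.1 + 1) % n = (k.1 + 1) % n := congrArg Fin.val h
  have hmod : ∀ a : ℕ, a < n → (a + 1) % n = if a + 1 = n then 0 else a + 1 := by
    intro a ha
    by_cases hc : a + 1 = n
    · simp [hc]
    · rw [Nat.mod_eq_of_lt (by omega)]; simp [hc]
  rw [hmod j.1 hj, hmod k.1 hk] at h'
  apply Fin.ext
  by_cases h1 : j.1 + 1 = n <;> by_cases h2 : k.1 + 1 = n <;> simp [h1, h2] at h' <;> omega

lemma gammaVec_div {n : ℕ} (c : Fin n → G.D) (hc : G.IsClosedPath c) (v : G.V) :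
    ∑ e ∈ univ.filter (fun e => G.o e = v), G.gammaVec c e = 0 := by
  have := Finset.sum_comm (s := univ.filter (fun e => G.o e = v)) (t := (univ : Finset (Fin n)))
    (f := fun e j => ((if e = c j then (1:ℂ) else 0) - (if e = G.rev (c j) then 1 else 0)))
  calc ∑ e ∈ univ.filter (fun e => G.o e = v), G.gammaVec c e
      = ∑ j : Fin n, ∑ e ∈ univ.filter (fun e => G.o e = v),
          ((if e = c j then (1:ℂ) else 0) - (if e = G.rev (c j) then 1 else 0)) := by
        rw [← Finset.sum_comm]
        exact Finset.sum_congr rfl fun e _ => G.gammaVec_apply c e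
    _ = ∑ j : Fin n, ((if G.o (c j) = v then (1:ℂ) else 0)
          - (if G.t (c j) = v then 1 else 0)) := by
        refine Finset.sum_congr rfl fun j _ => ?_
        rw [Finset.sum_sub_distrib, G.sum_filter_ite, G.sum_filter_ite, G.o_rev]
    _ = 0 := by
        rw [Finset.sum_sub_distrib, sub_eq_zero]
        have hb := Function.Bijective.sum_comp (cyc_bijective n)
          (fun k : Fin n => if G.o (c k) = v then (1:ℂ) else 0)
        rw [← hb]
        refine Finset.sum_congr rfl fun j _ => ?_
        rw [← hc j]

lemma gammaVec_mem {n : ℕ} (c : Fin n → G.D) (hc : G.IsClosedPath c) :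
    G.gammaVec c ∈ LinearMap.ker (G.dA G.groverWeight) ⊓
      LinearMap.ker (G.shiftS 0 + LinearMap.id) := by
  refine ⟨(G.mem_kerdA_iff _).mpr (G.gammaVec_div c hc), (G.mem_kerS_iff _).mpr ?_⟩
  exact G.gammaVec_rev c

lemma walkU_gamma {n : ℕ} (c : Fin n → G.D) (hc : G.IsClosedPath c) :
    G.walkU G.groverWeight 0 (G.gammaVec c) = G.gammaVec c := by
  have hdA : G.dA G.groverWeight (G.gammaVec c) = 0 :=
    LinearMap.mem_ker.mp ((G.mem_kerdA_iff _).mpr (G.gammaVec_div c hc))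
  have hC : G.coinC G.groverWeight (G.gammaVec c) = - G.gammaVec c := by
    simp [coinC, LinearMap.sub_apply, LinearMap.smul_apply, LinearMap.comp_apply, hdA]
  funext e
  rw [walkU, LinearMap.comp_apply, hC, map_neg]
  show -(G.shiftS 0 (G.gammaVec c)) e = _
  rw [G.shiftS_zero_apply, G.gammaVec_rev, neg_neg]

end SymDigraph

namespace SymDigraph

variable (G : SymDigraph)

lemma exists_next (φ : G.D → ℂ) (hanti : ∀ e, φ (G.rev e) = -φ e)
    (hdiv : ∀ v, ∑ e ∈ univ.filter (fun e => G.o e = v), φ e = 0)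
    (e : G.D) (he : φ e ≠ 0) :
    ∃ f, G.o f = G.t e ∧ φ f ≠ 0 ∧ f ≠ G.rev e := by
  by_contra h
  push_neg at h
  have hsum := hdiv (G.t e)
  have hone : ∑ f ∈ univ.filter (fun f => G.o f = G.t e), φ f = φ (G.rev e) := by
    apply Finset.sum_eq_single_of_mem
    · simp [G.o_rev]
    · intro f hf hne
      by_contra hφ
      exact hne (h f (by simpa using hf) hφ)
  rw [hone, hanti] at hsum
  exact he (neg_eq_zero.mp hsum)

/-- an infinite non-backtracking walk through the support of `φ` -/
noncomputable def walkSeq (φ : G.D → ℂ) (hanti : ∀ e, φ (G.rev e) = -φ e)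
    (hdiv : ∀ v, ∑ e ∈ univ.filter (fun e => G.o e = v), φ e = 0)
    (e₀ : G.D) (he₀ : φ e₀ ≠ 0) : ℕ → {e : G.D // φ e ≠ 0}
  | 0 => ⟨e₀, he₀⟩
  | (k+1) =>
    let p := walkSeq φ hanti hdiv e₀ he₀ k
    ⟨Classical.choose (G.exists_next φ hanti hdiv p.1 p.2),
      (Classical.choose_spec (G.exists_next φ hanti hdiv p.1 p.2)).2.1⟩

lemma walkSeq_succ (φ : G.D → ℂ) (hanti) (hdiv) (e₀ : G.D) (he₀ : φ e₀ ≠ 0) (k : ℕ) :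
    G.o (G.walkSeq φ hanti hdiv e₀ he₀ (k+1)).1 = G.t (G.walkSeq φ hanti hdiv e₀ he₀ k).1 ∧
    (G.walkSeq φ hanti hdiv e₀ he₀ (k+1)).1 ≠ G.rev (G.walkSeq φ hanti hdiv e₀ he₀ k).1 := by
  have hs := Classical.choose_spec (G.exists_next φ hanti hdiv
    (G.walkSeq φ hanti hdiv e₀ he₀ k).1 (G.walkSeq φ hanti hdiv e₀ he₀ k).2)
  exact ⟨hs.1, hs.2.2⟩

lemma exists_cycle_in_support (φ : G.D → ℂ) (hanti : ∀ e, φ (G.rev e) = -φ e)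
    (hdiv : ∀ v, ∑ e ∈ univ.filter (fun e => G.o e = v), φ e = 0)
    (hne : φ ≠ 0) :
    ∃ (n : ℕ) (hn : 0 < n) (c : Fin n → G.D), G.IsClosedPath c ∧
      Function.Injective (fun j => G.o (c j)) ∧ (∀ j, φ (c j) ≠ 0) ∧
      G.gammaVec c (c ⟨0, hn⟩) = 1 := by
  classical
  -- pick a starting arc in the support
  have : ∃ e₀, φ e₀ ≠ 0 := by
    by_contra h
    push_neg at h
    exact hne (funext fun e => h e)
  obtain ⟨e₀, he₀⟩ := this
  set a : ℕ → G.D := fun k => (G.walkSeq φ hanti hdiv e₀ he₀ k).1 with ha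
  have ha_ne : ∀ k, φ (a k) ≠ 0 := fun k => (G.walkSeq φ hanti hdiv e₀ he₀ k).2
  have ha_t : ∀ k, G.o (a (k+1)) = G.t (a k) :=
    fun k => (G.walkSeq_succ φ hanti hdiv e₀ he₀ k).1
  have ha_nb : ∀ k, a (k+1) ≠ G.rev (a k) :=
    fun k => (G.walkSeq_succ φ hanti hdiv e₀ he₀ k).2
  set v : ℕ → G.V := fun k => G.o (a k) with hv
  -- pigeonhole: some vertex repeats
  have hP : ∃ m, ∃ i < m, v i = v m := by
    obtain ⟨i, j, hij, hev⟩ := Fintype.exists_ne_map_eq_of_card_lt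
      (fun k : Fin (Fintype.card G.V + 1) => v k.1) (by simp)
    rcases lt_or_gt_of_ne (fun h => hij (Fin.ext h) : i.1 ≠ j.1) with h | h
    · exact ⟨j.1, i.1, h, hev⟩
    · exact ⟨i.1, j.1, h, hev.symm⟩
  set j₀ := Nat.find hP with hj₀
  obtain ⟨i₀, hi₀lt, hi₀v⟩ := Nat.find_spec hP
  set n := j₀ - i₀ with hn'
  have hn : 0 < n := by omega
  have hij : i₀ + n = j₀ := by omega
  -- no earlier repetitions
  have hnorep : ∀ p q, p < q → q < j₀ → v p ≠ v q := by
    intro p q hpq hq hvpq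
    exact Nat.find_min hP hq ⟨p, hpq, hvpq⟩
  refine ⟨n, hn, fun m => a (i₀ + m.1), ?_, ?_, fun m => ha_ne _, ?_⟩
  · -- closed path
    intro m
    show G.t (a (i₀ + m.1)) = G.o (a (i₀ + ((m.1 + 1) % n)))
    rw [← ha_t]
    by_cases hc : m.1 + 1 = n
    · have h1 : (m.1 + 1) % n = 0 := by rw [hc, Nat.mod_self]
      rw [h1]
      show G.o (a (i₀ + m.1 + 1)) = G.o (a (i₀ + 0))
      have : i₀ + m.1 + 1 = j₀ := by omega
      rw [this]
      simpa [hv] using hi₀v.symm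
    · have hm := m.2
      have h1 : (m.1 + 1) % n = m.1 + 1 := Nat.mod_eq_of_lt (by omega)
      rw [h1]
      exact congrArg (fun k => G.o (a k)) (by omega)
  · -- injective origins
    intro m m' hmm'
    simp only at hmm'
    by_contra hne'
    have hvv : v (i₀ + m.1) = v (i₀ + m'.1) := hmm'
    have hm := m.2; have hm' := m'.2
    rcases lt_trichotomy m.1 m'.1 with h | h | h
    · exact hnorep _ _ (by omega) (by omega) hvv
    · exact hne' (Fin.ext h)
    · exact hnorep _ _ (by omega) (by omega) hvv.symm
  · -- gamma value 1
    have hinj : ∀ m m' : Fin n, a (i₀ + m.1) = a (i₀ + m'.1) → m = m' := by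
      intro m m' h
      by_contra hne'
      have hvv : v (i₀ + m.1) = v (i₀ + m'.1) := congrArg G.o h
      have hm := m.2; have hm' := m'.2
      rcases lt_trichotomy m.1 m'.1 with h' | h' | h'
      · exact hnorep _ _ (by omega) (by omega) hvv
      · exact hne' (Fin.ext h')
      · exact hnorep _ _ (by omega) (by omega) hvv.symm
    have hnorev : ∀ m : Fin n, a i₀ ≠ G.rev (a (i₀ + m.1)) := by
      intro m habs
      have hm := m.2
      -- o (a i₀) = t (a (i₀+m)) = o (a (i₀+m+1))
      have hvo : v i₀ = G.t (a (i₀ + m.1)) := by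
        rw [hv]
        show G.o (a i₀) = _
        rw [habs, G.o_rev]
      by_cases hc : m.1 + 1 = n
      · -- last arc
        by_cases hm0 : m.1 = 0
        · -- n = 1 : a i₀ = rev (a i₀)
          rw [hm0] at habs
          simp only [Nat.add_zero] at habs
          exact G.rev_ne (a i₀) habs.symm
        · -- m ≥ 1
          have hrev : G.rev (a i₀) = a (i₀ + m.1) := by
            rw [habs, G.rev_rev]
          by_cases hm1 : m.1 = 1
          · -- backtracking: a (i₀+1) = rev (a i₀)
            apply ha_nb i₀
            rw [hm1] at habs
            rw [habs, G.rev_rev]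
          · -- 1 < m.1 < n : v (i₀+1) = v (i₀+m.1), contradict norep
            have hv1 : v (i₀ + 1) = v (i₀ + m.1) := by
              have h1 : v (i₀ + 1) = G.t (a i₀) := ha_t i₀
              have h2 : G.t (a i₀) = G.o (G.rev (a i₀)) := (G.o_rev (a i₀)).symm
              rw [hv]
              show G.o (a (i₀ + 1)) = G.o (a (i₀ + m.1))
              rw [show G.o (a (i₀+1)) = G.t (a i₀) from ha_t i₀, ← G.o_rev, hrev]
            exact hnorep (i₀ + 1) (i₀ + m.1) (by omega) (by omega) hv1
      · -- m+1 < n : v i₀ = v (i₀ + m.1 + 1), contradict norep / find minimality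
        have hvv : v i₀ = v (i₀ + m.1 + 1) := by
          rw [hvo, ← ha_t]
        exact hnorep i₀ (i₀ + m.1 + 1) (by omega) (by omega) hvv
    rw [G.gammaVec_apply]
    have hterm : ∀ m : Fin n,
        ((if a (i₀ + (0:ℕ)) = a (i₀ + m.1) then (1:ℂ) else 0)
          - (if a (i₀ + (0:ℕ)) = G.rev (a (i₀ + m.1)) then 1 else 0))
        = if m = ⟨0, hn⟩ then 1 else 0 := by
      intro m
      have h2 : ¬ (a (i₀ + (0:ℕ)) = G.rev (a (i₀ + m.1))) := by
        simpa using hnorev m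
      rw [if_neg h2, sub_zero]
      by_cases h1 : m = ⟨0, hn⟩
      · rw [if_pos h1, if_pos (by rw [h1])]
      · rw [if_neg h1, if_neg]
        intro habs
        exact h1 ((hinj ⟨0, hn⟩ m (by simpa using habs)).symm)
    calc ∑ m : Fin n, ((if a (i₀ + (⟨0,hn⟩ : Fin n).1) = a (i₀ + m.1) then (1:ℂ) else 0)
            - (if a (i₀ + (⟨0,hn⟩ : Fin n).1) = G.rev (a (i₀ + m.1)) then 1 else 0))
        = ∑ m : Fin n, if m = ⟨0, hn⟩ then (1:ℂ) else 0 := Finset.sum_congr rfl fun m _ => hterm m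
      _ = 1 := by rw [Finset.sum_ite_eq']; simp

end SymDigraph

namespace SymDigraph

variable (G : SymDigraph)

lemma gammaVec_support {n : ℕ} (c : Fin n → G.D) (e : G.D)
    (h : G.gammaVec c e ≠ 0) : ∃ m, e = c m ∨ e = G.rev (c m) := by
  by_contra hco
  push_neg at hco
  apply h
  rw [G.gammaVec_apply]
  refine Finset.sum_eq_zero fun m _ => ?_
  rw [if_neg (hco m).1, if_neg (hco m).2, sub_zero]

lemma mem_span_cycles (φ : G.D → ℂ) (hanti : ∀ e, φ (G.rev e) = -φ e)
    (hdiv : ∀ v, ∑ e ∈ univ.filter (fun e => G.o e = v), φ e = 0) :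
    φ ∈ Submodule.span ℂ {x : G.D → ℂ |
          ∃ (n : ℕ) (_ : 0 < n) (c : Fin n → G.D), G.IsClosedPath c ∧
            Function.Injective (fun j => G.o (c j)) ∧ x = G.gammaVec c} := by
  classical
  set S := {x : G.D → ℂ |
          ∃ (n : ℕ) (_ : 0 < n) (c : Fin n → G.D), G.IsClosedPath c ∧
            Function.Injective (fun j => G.o (c j)) ∧ x = G.gammaVec c} with hS
  suffices h : ∀ N (ψ : G.D → ℂ), (∀ e, ψ (G.rev e) = -ψ e) →
      (∀ v, ∑ e ∈ univ.filter (fun e => G.o e = v), ψ e = 0) →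
      (univ.filter (fun e => ψ e ≠ 0)).card ≤ N →
      ψ ∈ Submodule.span ℂ S by
    exact h _ φ hanti hdiv le_rfl
  intro N
  induction N with
  | zero =>
    intro ψ h1 h2 hcard
    have hz : ψ = 0 := by
      funext e
      show ψ e = 0
      by_contra he
      have hmem : e ∈ univ.filter (fun e => ψ e ≠ 0) := by simp [he]
      have := Finset.card_pos.mpr ⟨e, hmem⟩
      omega
    rw [hz]
    exact Submodule.zero_mem _
  | succ N ih =>
    intro ψ h1 h2 hcard
    by_cases hz : ψ = 0
    · rw [hz]; exact Submodule.zero_mem _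
    obtain ⟨n, hn, c, hclosed, hinj, hsupp, hg1⟩ := G.exists_cycle_in_support ψ h1 h2 hz
    set γ := G.gammaVec c with hγ
    have hγS : γ ∈ S := ⟨n, hn, c, hclosed, hinj, rfl⟩
    set α := ψ (c ⟨0, hn⟩) with hα
    set ψ' := ψ - α • γ with hψ'
    have h1' : ∀ e, ψ' (G.rev e) = -ψ' e := by
      intro e
      simp only [hψ', Pi.sub_apply, Pi.smul_apply, smul_eq_mul, h1 e, hγ, G.gammaVec_rev]
      ring
    have h2' : ∀ v, ∑ e ∈ univ.filter (fun e => G.o e = v), ψ' e = 0 := by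
      intro v
      simp only [hψ', Pi.sub_apply, Pi.smul_apply, smul_eq_mul]
      rw [Finset.sum_sub_distrib, h2 v, ← Finset.mul_sum, hγ, G.gammaVec_div c hclosed v]
      ring
    have hsub : univ.filter (fun e => ψ' e ≠ 0) ⊆ univ.filter (fun e => ψ e ≠ 0) := by
      intro e he
      simp only [Finset.mem_filter, Finset.mem_univ, true_and] at he ⊢
      intro hψe
      apply he
      have hγe : γ e = 0 := by
        by_contra hγe
        obtain ⟨m, hm | hm⟩ := G.gammaVec_support c e hγe
        · exact (hsupp m) (hm ▸ hψe)
        · apply hsupp m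
          have h := h1 (c m)
          rw [← hm, hψe] at h
          exact neg_eq_zero.mp h.symm
      simp [hψ', hψe, hγe]
    have hc0ψ : c ⟨0, hn⟩ ∈ univ.filter (fun e => ψ e ≠ 0) := by
      simp [hsupp ⟨0, hn⟩]
    have hc0ψ' : c ⟨0, hn⟩ ∉ univ.filter (fun e => ψ' e ≠ 0) := by
      simp only [Finset.mem_filter, Finset.mem_univ, true_and, not_not]
      show ψ (c ⟨0, hn⟩) - α • γ (c ⟨0, hn⟩) = 0
      rw [hg1]
      simp [hα]
    have hlt := Finset.card_lt_card
      ((Finset.ssubset_iff_of_subset hsub).mpr ⟨_, hc0ψ, hc0ψ'⟩)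
    have hmem' := ih ψ' h1' h2' (by omega)
    have heq : ψ = ψ' + α • γ := by simp [hψ']
    rw [heq]
    exact Submodule.add_mem _ hmem'
      (Submodule.smul_mem _ _ (Submodule.subset_span hγS))

lemma span_eq_M :
    LinearMap.ker (G.dA G.groverWeight) ⊓ LinearMap.ker (G.shiftS 0 + LinearMap.id)
      = Submodule.span ℂ {x : G.D → ℂ |
          ∃ (n : ℕ) (_ : 0 < n) (c : Fin n → G.D), G.IsClosedPath c ∧
            Function.Injective (fun j => G.o (c j)) ∧ x = G.gammaVec c} := by
  apply le_antisymm
  · intro φ hφ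
    exact G.mem_span_cycles φ ((G.mem_kerS_iff φ).mp hφ.2) ((G.mem_kerdA_iff φ).mp hφ.1)
  · rw [Submodule.span_le]
    rintro x ⟨n, hn, c, hclosed, hinj, rfl⟩
    exact G.gammaVec_mem c hclosed

end SymDigraph

namespace SymDigraph

variable (G : SymDigraph)

/-- an orientation: one arc out of each reversal pair -/
noncomputable def orient : Finset G.D :=
  univ.filter (fun e => ((Fintype.equivFin G.D) e : ℕ) < ((Fintype.equivFin G.D) (G.rev e) : ℕ))

lemma mem_orient_iff (e : G.D) : e ∈ G.orient ↔ G.rev e ∉ G.orient := by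
  simp only [orient, Finset.mem_filter, Finset.mem_univ, true_and, G.rev_rev, not_lt]
  have hne : ((Fintype.equivFin G.D) e : ℕ) ≠ ((Fintype.equivFin G.D) (G.rev e) : ℕ) := by
    intro h
    exact G.rev_ne e ((Fintype.equivFin G.D).injective (Fin.val_injective h)).symm
  omega

lemma rev_mem_orient {e : G.D} (he : e ∉ G.orient) : G.rev e ∈ G.orient := by
  have h3 := G.mem_orient_iff (G.rev e)
  rw [G.rev_rev] at h3
  exact h3.mpr he

lemma two_card_orient : 2 * G.orient.card = Fintype.card G.D := by
  classical
  have hcompl : G.orient.card = G.orientᶜ.card := by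
    refine Finset.card_bij (fun e _ => G.rev e) ?_ ?_ ?_
    · intro e he
      exact Finset.mem_compl.mpr ((G.mem_orient_iff e).mp he)
    · intro e _ f _ h
      exact G.rev_inj h
    · intro f hf
      exact ⟨G.rev f, G.rev_mem_orient (Finset.mem_compl.mp hf), G.rev_rev f⟩
  have := Finset.card_add_card_compl G.orient
  omega

/-- extend a function on the orientation to an antisymmetric function on all arcs -/
noncomputable def extendAnti (g : {e // e ∈ G.orient} → ℂ) : G.D → ℂ :=
  fun e => if h : e ∈ G.orient then g ⟨e, h⟩
    else if h2 : G.rev e ∈ G.orient then -g ⟨G.rev e, h2⟩ else 0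

lemma finrank_kerS :
    Module.finrank ℂ (LinearMap.ker (G.shiftS 0 + LinearMap.id (R := ℂ) (M := G.D → ℂ)))
      = G.orient.card := by
  classical
  let R : (LinearMap.ker (G.shiftS 0 + LinearMap.id)) →ₗ[ℂ] ({e // e ∈ G.orient} → ℂ) :=
    { toFun := fun φ => fun e => φ.1 e.1
      map_add' := fun φ ψ => rfl
      map_smul' := fun c φ => rfl }
  have hbij : Function.Bijective R := by
    constructor
    · intro φ ψ h
      apply Subtype.ext
      funext e
      have hφ := (G.mem_kerS_iff φ.1).mp φ.2
      have hψ := (G.mem_kerS_iff ψ.1).mp ψ.2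
      by_cases he : e ∈ G.orient
      · exact congrFun h ⟨e, he⟩
      · have he2 : G.rev e ∈ G.orient := G.rev_mem_orient he
        have h6 := congrFun h ⟨G.rev e, he2⟩
        have h4 := hφ e; have h5 := hψ e
        show φ.1 e = ψ.1 e
        have : φ.1 (G.rev e) = ψ.1 (G.rev e) := h6
        rw [h4, h5] at this
        exact neg_injective this
    · intro g
      refine ⟨⟨G.extendAnti g, ?_⟩, ?_⟩
      · apply (G.mem_kerS_iff _).mpr
        intro e
        by_cases he : e ∈ G.orient
        · have hre : G.rev e ∉ G.orient := (G.mem_orient_iff e).mp he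
          simp [extendAnti, G.rev_rev, he, hre]
        · have hre : G.rev e ∈ G.orient := G.rev_mem_orient he
          simp [extendAnti, G.rev_rev, he, hre]
      · funext e
        show G.extendAnti g e.1 = g e
        simp [extendAnti, e.2]
  calc Module.finrank ℂ (LinearMap.ker (G.shiftS 0 + LinearMap.id))
      = Module.finrank ℂ ({e // e ∈ G.orient} → ℂ) :=
        (LinearEquiv.ofBijective R hbij).finrank_eq
    _ = Fintype.card {e // e ∈ G.orient} := Module.finrank_pi ℂ
    _ = G.orient.card := Fintype.card_coe G.orient

/-- the linear functional `f ↦ ∑_v √(deg v) f v` -/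
noncomputable def ell : (G.V → ℂ) →ₗ[ℂ] ℂ where
  toFun f := ∑ v, (Real.sqrt (G.deg v) : ℂ) * f v
  map_add' f g := by simp [mul_add, Finset.sum_add_distrib]
  map_smul' c f := by
    simp only [Pi.smul_apply, smul_eq_mul, RingHom.id_apply, Finset.mul_sum]
    exact Finset.sum_congr rfl fun v _ => by ring

lemma finrank_ker_ell :
    1 + Module.finrank ℂ (LinearMap.ker G.ell) = Fintype.card G.V := by
  have hsurj : Function.Surjective G.ell := by
    intro z
    have v₀ : G.V := Classical.arbitrary G.V
    refine ⟨fun v => if v = v₀ then z * ((Real.sqrt (G.deg v₀) : ℂ))⁻¹ else 0, ?_⟩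
    show ∑ v, (Real.sqrt (G.deg v) : ℂ) *
      (if v = v₀ then z * ((Real.sqrt (G.deg v₀) : ℂ))⁻¹ else 0) = z
    rw [Finset.sum_eq_single v₀]
    · rw [if_pos rfl]
      rw [← mul_assoc, mul_comm ((Real.sqrt (G.deg v₀) : ℂ)) z, mul_assoc,
        mul_inv_cancel₀ (G.sqrtdeg_ne v₀), mul_one]
    · intro b _ hb
      rw [if_neg hb, mul_zero]
    · intro h
      exact absurd (Finset.mem_univ v₀) h
  have h := LinearMap.finrank_range_add_finrank_ker G.ell
  rw [LinearMap.range_eq_top.mpr hsurj, finrank_top, Module.finrank_self,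
    Module.finrank_pi] at h
  exact h

lemma sum_antisym_eq_zero (φ : G.D → ℂ) (hanti : ∀ e, φ (G.rev e) = -φ e) :
    ∑ e, φ e = 0 := by
  have hrev : Function.Bijective G.rev :=
    Function.Involutive.bijective G.rev_rev
  have h1 : ∑ e, φ e = ∑ e, φ (G.rev e) :=
    (Function.Bijective.sum_comp hrev φ).symm
  have h2 : ∑ e, φ (G.rev e) = -∑ e, φ e := by
    rw [← Finset.sum_neg_distrib]
    exact Finset.sum_congr rfl fun e _ => hanti e
  have h3 := h1.trans h2
  have h4 : (2:ℂ) * ∑ e, φ e = 0 := by linear_combination h3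
  exact (mul_eq_zero.mp h4).resolve_left two_ne_zero

end SymDigraph

namespace SymDigraph

variable (G : SymDigraph)

noncomputable def gfun (a b : G.V) : G.V → ℂ := fun x =>
  (if x = a then ((Real.sqrt (G.deg a) : ℂ))⁻¹ else 0)
    - (if x = b then ((Real.sqrt (G.deg b) : ℂ))⁻¹ else 0)

lemma gfun_trans (a b c : G.V) : G.gfun a c = G.gfun a b + G.gfun b c := by
  funext x
  simp only [gfun, Pi.add_apply]
  ring

lemma delta_pair_anti (e f : G.D) :
    (G.deltaArc e - G.deltaArc (G.rev e)) (G.rev f)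
      = -((G.deltaArc e - G.deltaArc (G.rev e)) f) := by
  simp only [Pi.sub_apply, deltaArc]
  have h1 : (G.rev f = e) ↔ (f = G.rev e) := by
    constructor
    · intro h; rw [← h, G.rev_rev]
    · intro h; rw [h, G.rev_rev]
  have h2 : (G.rev f = G.rev e) ↔ (f = e) :=
    ⟨fun h => G.rev_inj h, fun h => by rw [h]⟩
  rw [if_congr h1 rfl rfl, if_congr h2 rfl rfl]
  ring

lemma dA_delta_pair (e : G.D) :
    G.dA G.groverWeight (G.deltaArc e - G.deltaArc (G.rev e))
      = G.gfun (G.o e) (G.t e) := by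
  funext v
  rw [dA_grover_apply]
  have hsum : ∑ f ∈ univ.filter (fun f => G.o f = v),
      (G.deltaArc e - G.deltaArc (G.rev e)) f
      = (if G.o e = v then (1:ℂ) else 0) - (if G.t e = v then 1 else 0) := by
    simp only [Pi.sub_apply, deltaArc]
    rw [Finset.sum_sub_distrib, G.sum_filter_ite, G.sum_filter_ite, G.o_rev]
  rw [hsum]
  simp only [gfun]
  by_cases h1 : G.o e = v <;> by_cases h2 : G.t e = v
  · rw [if_pos h1, if_pos h2, if_pos h1.symm, if_pos h2.symm, ← h1,
      show G.t e = G.o e from h2.trans h1.symm]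
    ring
  · rw [if_pos h1, if_neg h2, if_pos h1.symm, if_neg (fun h => h2 h.symm), ← h1]
    ring
  · rw [if_neg h1, if_pos h2, if_neg (fun h => h1 h.symm), if_pos h2.symm, ← h2]
    ring
  · rw [if_neg h1, if_neg h2, if_neg (fun h => h1 h.symm), if_neg (fun h => h2 h.symm)]
    ring

lemma gfun_mem_range {u v : G.V}
    (h : Relation.ReflTransGen (fun a b => ∃ e : G.D, G.o e = a ∧ G.t e = b) u v) :
    G.gfun u v ∈ LinearMap.range
      ((G.dA G.groverWeight).domRestrict (LinearMap.ker (G.shiftS 0 + LinearMap.id))) := by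
  induction h with
  | refl =>
    have : G.gfun u u = 0 := by funext x; simp [gfun]
    rw [this]
    exact Submodule.zero_mem _
  | @tail b c hub hbc ih =>
    obtain ⟨e, he1, he2⟩ := hbc
    rw [G.gfun_trans u b c]
    refine Submodule.add_mem _ ih ?_
    have hmem : (G.deltaArc e - G.deltaArc (G.rev e)) ∈
        LinearMap.ker (G.shiftS 0 + LinearMap.id) :=
      (G.mem_kerS_iff _).mpr (G.delta_pair_anti e)
    refine ⟨⟨G.deltaArc e - G.deltaArc (G.rev e), hmem⟩, ?_⟩
    show G.dA G.groverWeight (G.deltaArc e - G.deltaArc (G.rev e)) = G.gfun b c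
    rw [G.dA_delta_pair, he1, he2]

lemma range_domRestrict_eq (hG : G.Connected) :
    LinearMap.range
        ((G.dA G.groverWeight).domRestrict (LinearMap.ker (G.shiftS 0 + LinearMap.id)))
      = LinearMap.ker G.ell := by
  apply le_antisymm
  · rintro f ⟨⟨φ, hφ⟩, rfl⟩
    have hanti := (G.mem_kerS_iff φ).mp hφ
    apply LinearMap.mem_ker.mpr
    show ∑ v, (Real.sqrt (G.deg v) : ℂ) * (G.dA G.groverWeight φ v) = 0
    have hstep : ∀ v, (Real.sqrt (G.deg v) : ℂ) * (G.dA G.groverWeight φ v)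
        = ∑ e ∈ univ.filter (fun e => G.o e = v), φ e := by
      intro v
      rw [dA_grover_apply, ← mul_assoc, mul_inv_cancel₀ (G.sqrtdeg_ne v), one_mul]
    rw [Finset.sum_congr rfl (fun v _ => hstep v),
      Finset.sum_fiberwise univ G.o φ]
    exact G.sum_antisym_eq_zero φ hanti
  · intro f hf
    have hf0 : ∑ v, (Real.sqrt (G.deg v) : ℂ) * f v = 0 := hf
    have v₀ : G.V := Classical.arbitrary G.V
    have hrepr : f = ∑ v, ((Real.sqrt (G.deg v) : ℂ) * f v) • G.gfun v v₀ := by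
      funext x
      simp only [Finset.sum_apply, Pi.smul_apply, smul_eq_mul, gfun]
      have hterm : ∀ v, ((Real.sqrt (G.deg v) : ℂ) * f v) *
          ((if x = v then ((Real.sqrt (G.deg v) : ℂ))⁻¹ else 0)
            - (if x = v₀ then ((Real.sqrt (G.deg v₀) : ℂ))⁻¹ else 0))
          = (if x = v then f v else 0)
            - ((Real.sqrt (G.deg v) : ℂ) * f v)
              * (if x = v₀ then ((Real.sqrt (G.deg v₀) : ℂ))⁻¹ else 0) := by
        intro v
        by_cases h : x = v
        · rw [if_pos h, if_pos h, mul_sub]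
          congr 1
          rw [mul_comm ((Real.sqrt (G.deg v) : ℂ)) (f v), mul_assoc,
            mul_inv_cancel₀ (G.sqrtdeg_ne v), mul_one]
        · rw [if_neg h, if_neg h]
          ring
      rw [Finset.sum_congr rfl (fun v _ => hterm v), Finset.sum_sub_distrib,
        Finset.sum_ite_eq univ x f, ← Finset.sum_mul, hf0, zero_mul, sub_zero,
        if_pos (Finset.mem_univ x)]
    rw [hrepr]
    exact Submodule.sum_mem _ fun v _ =>
      Submodule.smul_mem _ _ (G.gfun_mem_range (hG v v₀))

set_option synthInstance.maxHeartbeats 1000000 in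
lemma dim_formula (hG : G.Connected) :
    ((Module.finrank ℂ
        ↥(LinearMap.ker (G.dA G.groverWeight) ⊓
          LinearMap.ker (G.shiftS 0 + LinearMap.id))) : ℤ)
      = (Fintype.card G.D : ℤ) / 2 - (Fintype.card G.V : ℤ) + 1 := by
  classical
  set A' := LinearMap.ker (G.shiftS 0 + LinearMap.id (R := ℂ) (M := G.D → ℂ)) with hA'
  set M := LinearMap.ker (G.dA G.groverWeight) ⊓ A' with hM
  set L := (G.dA G.groverWeight).domRestrict A' with hL
  have hRN := LinearMap.finrank_range_add_finrank_ker L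
  have hdom : Module.finrank ℂ A' = G.orient.card := G.finrank_kerS
  have hrange : Module.finrank ℂ (LinearMap.range L)
      = Module.finrank ℂ (LinearMap.ker G.ell) := by
    rw [G.range_domRestrict_eq hG]
  have hkerL : LinearMap.ker L = Submodule.comap A'.subtype M := by
    ext x
    constructor
    · intro hx
      refine Submodule.mem_comap.mpr ⟨LinearMap.mem_ker.mp hx, x.2⟩
    · intro hx
      exact LinearMap.mem_ker.mpr (Submodule.mem_comap.mp hx).1
  have hMle : M ≤ A' := inf_le_right
  have hkerdim : Module.finrank ℂ (LinearMap.ker L) = Module.finrank ℂ M := by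
    rw [hkerL]
    exact (Submodule.comapSubtypeEquivOfLe hMle).finrank_eq
  have hell := G.finrank_ker_ell
  have hcard := G.two_card_orient
  rw [hdom, hrange, hkerdim] at hRN
  have hV : 0 < Fintype.card G.V := Fintype.card_pos
  have h2 : (Fintype.card G.D : ℤ) = 2 * (G.orient.card : ℤ) := by exact_mod_cast hcard.symm
  rw [h2, Int.mul_ediv_cancel_left _ (by norm_num)]
  omega

end SymDigraph

/-- For the Grover walk (`θ ≡ 0`, Grover weight) on a connected finite
symmetric digraph: `M₊ := ker d_A ∩ ker(S + I)` equals the span of `γ(c)` over essential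
cycles `c`; `dim M₊ = |E| − |V| + 1` (with `|E| = |D|/2`); and `U γ(c) = γ(c)` for every
closed path `c`. -/
theorem grover_plus_one_eigenspace (G : SymDigraph) (hG : G.Connected) :
    (LinearMap.ker (G.dA G.groverWeight) ⊓
        LinearMap.ker (G.shiftS 0 + LinearMap.id)
      = Submodule.span ℂ {x : G.D → ℂ |
          ∃ (n : ℕ) (_ : 0 < n) (c : Fin n → G.D), G.IsClosedPath c ∧
            Function.Injective (fun j => G.o (c j)) ∧ x = G.gammaVec c}) ∧
    ((Module.finrank ℂ
        ↥(LinearMap.ker (G.dA G.groverWeight) ⊓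
          LinearMap.ker (G.shiftS 0 + LinearMap.id)) : ℤ)
      = (Fintype.card G.D : ℤ) / 2 - (Fintype.card G.V : ℤ) + 1) ∧
    (∀ (n : ℕ), 0 < n → ∀ c : Fin n → G.D, G.IsClosedPath c →
      G.walkU G.groverWeight 0 (G.gammaVec c) = G.gammaVec c) :=
  ⟨G.span_eq_M, G.dim_formula hG, fun n _ c hc => G.walkU_gamma c hc⟩
end
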